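/- Let v ∈ V, x ∈ win*_v, F : V → ℝ, and let i, i' ∈ C_x, where C_x = {x} ∪ {j ∈ win⁻_v | next_v(j) = x}. Then cost_F(v,i) − cost_F(v,i') = cost_F(x,i) − cost_F(x,i'). In particular, a minimizer of cost_F(x,·) over C_x is also a minimizer of cost_F(v,·) over C_x. -/

import Mathlib

open Finset
open scoped Classical

noncomputable section

variable {V : Type} [Fintype V] [PartialOrder V]

/-- The chain `T[v,i]` : all vertices `p` with `v ≤ p ≤ i`. -/
def chainCC (v i : V) : Finset V := univ.filter (fun p => v ≤ p ∧ p ≤ i)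

/-- The chain `T[v,i)` : `T[v,i]` without `i`. -/
def chainCO (v i : V) : Finset V := (chainCC v i).erase i

/-- `p` is the parent of `j`. -/
def IsParent (p j : V) : Prop := p < j ∧ ¬ ∃ q, p < q ∧ q < j

/-- `u` is s-maximal in `T_v`. -/
def SMax (s : V → ℝ) (v u : V) : Prop := v ≤ u ∧ ∀ p ∈ chainCO v u, s p < s u

/-- The window of `v`. -/
def win (w : V → ℝ) (w0 : ℝ) (v : V) : Finset V :=
  univ.filter (fun i => v ≤ i ∧ ∑ j ∈ chainCC v i, w j ≤ w0)

/-- `win*_v`: the s-maximal vertices of the window of `v`. -/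
def winStar (w : V → ℝ) (w0 : ℝ) (s : V → ℝ) (v : V) : Finset V :=
  (win w w0 v).filter (fun i => SMax s v i)

/-- `win⁻_v = win_v \ win*_v`. -/
def winMinus (w : V → ℝ) (w0 : ℝ) (s : V → ℝ) (v : V) : Finset V :=
  win w w0 v \ winStar w w0 s v

/-- `next_v(u)`: the greatest (closest to `u`) s-maximal element of `T[v,u)`,
if such a greatest element exists (junk value `v` otherwise). -/
def nxt (s : V → ℝ) (v u : V) : V :=
  if h : ∃ x ∈ chainCO v u, SMax s v x ∧ ∀ y ∈ chainCO v u, SMax s v y → y ≤ x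
  then h.choose else v

/-- The vertices `j` outside `T[v,i]` whose parent lies in `T[v,i]`. -/
def branchOff (v i : V) : Finset V :=
  univ.filter (fun j => j ∉ chainCC v i ∧ ∃ p ∈ chainCC v i, IsParent p j)

/-- `sum_F(v,i) = Σ F(j)` over `j ∉ T[v,i]` whose parent lies in `T[v,i]`. -/
def sumF (F : V → ℝ) (v i : V) : ℝ := ∑ j ∈ branchOff v i, F j

/-- `cost_F(v,i)`: `sum_F(v,i) + s_i` if `i ∈ win*_v`, and
`sum_F(v,i) + s_{next_v(i)}` otherwise (in particular for `i ∈ win⁻_v`). -/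
def costF (w : V → ℝ) (w0 : ℝ) (s : V → ℝ) (F : V → ℝ) (v i : V) : ℝ :=
  if i ∈ winStar w w0 s v then sumF F v i + s i else sumF F v i + s (nxt s v i)

end

section AuxProofs

variable {V : Type} [Fintype V] [PartialOrder V]

lemma mem_chainCC' {v i p : V} : p ∈ chainCC v i ↔ v ≤ p ∧ p ≤ i := by
  simp [chainCC]

lemma mem_chainCO' {v i p : V} : p ∈ chainCO v i ↔ p ≠ i ∧ v ≤ p ∧ p ≤ i := by
  simp [chainCO, chainCC]

lemma sMax_self (s : V → ℝ) (v : V) : SMax s v v := by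
  refine ⟨le_refl v, fun p hp => ?_⟩
  rw [mem_chainCO'] at hp
  exact absurd (le_antisymm hp.2.2 hp.2.1) hp.1

lemma parent_unique (htree : ∀ a b c : V, a ≤ c → b ≤ c → a ≤ b ∨ b ≤ a)
    {p q j : V} (hp : IsParent p j) (hq : IsParent q j) : p = q := by
  rcases htree p q j hp.1.le hq.1.le with h | h
  · rcases h.lt_or_eq with h' | h'
    · exact absurd ⟨q, h', hq.1⟩ hp.2
    · exact h'
  · rcases h.lt_or_eq with h' | h'
    · exact absurd ⟨p, h', hp.1⟩ hq.2
    · exact h'.symm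

lemma nxt_spec (htree : ∀ a b c : V, a ≤ c → b ≤ c → a ≤ b ∨ b ≤ a)
    {s : V → ℝ} {v i : V} (hvi : v ≤ i) (hne : v ≠ i) :
    nxt s v i ∈ chainCO v i ∧ SMax s v (nxt s v i) ∧
      ∀ y ∈ chainCO v i, SMax s v y → y ≤ nxt s v i := by
  classical
  have hex : ∃ z ∈ chainCO v i, SMax s v z ∧ ∀ y ∈ chainCO v i, SMax s v y → y ≤ z := by
    obtain ⟨a, ha, hamax⟩ : ∃ a ∈ (chainCO v i).filter (fun y => SMax s v y),
        ∀ y ∈ (chainCO v i).filter (fun y => SMax s v y), ¬ a < y := by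
      obtain ⟨a, ha⟩ := Finset.exists_maximal (s := (chainCO v i).filter (fun y => SMax s v y))
        ⟨v, by simp [Finset.mem_filter, mem_chainCO', hne, hvi, sMax_self]⟩
      exact ⟨a, ha.1, fun y hy hlt => hlt.not_ge (ha.2 hy hlt.le)⟩
    rw [Finset.mem_filter] at ha
    refine ⟨a, ha.1, ha.2, fun y hy hsy => ?_⟩
    have hy' : y ∈ (chainCO v i).filter (fun y => SMax s v y) :=
      Finset.mem_filter.2 ⟨hy, hsy⟩
    have hya := hamax y hy'
    rcases htree a y i (mem_chainCO'.1 ha.1).2.2 (mem_chainCO'.1 hy).2.2 with h | h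
    · rcases h.lt_or_eq with h' | h'
      · exact absurd h' hya
      · exact h'.ge
    · exact h
  unfold nxt
  rw [dif_pos hex]
  exact hex.choose_spec

lemma branchOff_decomp (htree : ∀ a b c : V, a ≤ c → b ≤ c → a ≤ b ∨ b ≤ a)
    {v x i : V} (hvx : v ≤ x) (hxi : x ≤ i) :
    branchOff v i =
      (univ.filter (fun j => ¬ j ≤ x ∧ ∃ p ∈ chainCO v x, IsParent p j)) ∪ branchOff x i ∧
    Disjoint (univ.filter (fun j => ¬ j ≤ x ∧ ∃ p ∈ chainCO v x, IsParent p j))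
      (branchOff x i) := by
  classical
  constructor
  · ext j
    simp only [branchOff, Finset.mem_union, Finset.mem_filter, Finset.mem_univ, true_and]
    constructor
    · rintro ⟨hj, p, hp, hpar⟩
      rw [mem_chainCC'] at hp
      have hji : ¬ j ≤ i := fun hji => hj (mem_chainCC'.2 ⟨le_trans hp.1 hpar.1.le, hji⟩)
      rcases htree p x i hp.2 hxi with h | h
      · rcases h.lt_or_eq with h' | h'
        · left
          refine ⟨fun hjx => hji (le_trans hjx hxi), p, mem_chainCO'.2 ⟨h'.ne, hp.1, h⟩, hpar⟩
        · right
          refine ⟨fun hc => hji (mem_chainCC'.1 hc).2,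
            p, mem_chainCC'.2 ⟨h'.ge, hp.2⟩, hpar⟩
      · right
        refine ⟨fun hc => hji (mem_chainCC'.1 hc).2, p, mem_chainCC'.2 ⟨h, hp.2⟩, hpar⟩
    · rintro (⟨hjx, p, hp, hpar⟩ | ⟨hj, p, hp, hpar⟩)
      · rw [mem_chainCO'] at hp
        have hpx : p < x := lt_of_le_of_ne hp.2.2 hp.1
        refine ⟨?_, p, mem_chainCC'.2 ⟨hp.2.1, le_trans hp.2.2 hxi⟩, hpar⟩
        intro hc
        rw [mem_chainCC'] at hc
        rcases htree j x i hc.2 hxi with h | h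
        · exact hjx h
        · have hxj : x < j := lt_of_le_of_ne h (fun he => hjx he.ge)
          exact hpar.2 ⟨x, hpx, hxj⟩
      · rw [mem_chainCC'] at hp
        have hxj : x ≤ j := le_trans hp.1 hpar.1.le
        have hji : ¬ j ≤ i := fun hji => hj (mem_chainCC'.2 ⟨hxj, hji⟩)
        refine ⟨fun hc => hji (mem_chainCC'.1 hc).2,
          p, mem_chainCC'.2 ⟨le_trans hvx hp.1, hp.2⟩, hpar⟩
  · rw [Finset.disjoint_left]
    rintro j hj1 hj2
    simp only [Finset.mem_filter, Finset.mem_univ, true_and, branchOff] at hj1 hj2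
    obtain ⟨hjx, p, hp, hpar⟩ := hj1
    obtain ⟨hj, q, hq, hqar⟩ := hj2
    have := parent_unique htree hpar hqar
    subst this
    rw [mem_chainCO'] at hp
    rw [mem_chainCC'] at hq
    exact hp.1 (le_antisymm hp.2.2 hq.1)

lemma sumF_diff (htree : ∀ a b c : V, a ≤ c → b ≤ c → a ≤ b ∨ b ≤ a)
    (F : V → ℝ) {v x i : V} (hvx : v ≤ x) (hxi : x ≤ i) :
    sumF F v i - sumF F x i = sumF F v x - sumF F x x := by
  have h1 := branchOff_decomp htree hvx hxi
  have h2 := branchOff_decomp htree hvx (le_refl x)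
  unfold sumF
  rw [h1.1, h2.1, Finset.sum_union h1.2, Finset.sum_union h2.2]
  ring

end AuxProofs

section MainProofs

variable {V : Type} [Fintype V] [PartialOrder V]

lemma chainCC_self (x : V) : chainCC x x = {x} := by
  ext p
  simp only [mem_chainCC', Finset.mem_singleton]
  constructor
  · rintro ⟨h1, h2⟩; exact le_antisymm h2 h1
  · rintro rfl; exact ⟨le_refl p, le_refl p⟩

lemma cost_eq (htree : ∀ a b c : V, a ≤ c → b ≤ c → a ≤ b ∨ b ≤ a)
    (w s : V → ℝ) (w0 : ℝ) (F : V → ℝ) (hw : ∀ i : V, 0 ≤ w i)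
    {v x i : V} (hx : x ∈ winStar w w0 s v)
    (hi : i ∈ insert x ((winMinus w w0 s v).filter (fun j => nxt s v j = x))) :
    costF w w0 s F v i = costF w w0 s F x i + (sumF F v x - sumF F x x) := by
  classical
  have hx' := hx
  rw [winStar, Finset.mem_filter] at hx'
  have hxwin := hx'.1
  have hxsm : SMax s v x := hx'.2
  rw [win, Finset.mem_filter] at hxwin
  have hvx0 : v ≤ x := hxwin.2.1
  have hsumvx : ∑ j ∈ chainCC v x, w j ≤ w0 := hxwin.2.2
  -- x ∈ winStar w w0 s x
  have hwx : w x ≤ w0 := by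
    refine le_trans ?_ hsumvx
    exact Finset.single_le_sum (fun j _ => hw j) (mem_chainCC'.2 ⟨hvx0, le_refl x⟩)
  have hxx : x ∈ winStar w w0 s x := by
    rw [winStar, Finset.mem_filter, win, Finset.mem_filter]
    refine ⟨⟨Finset.mem_univ x, le_refl x, ?_⟩, sMax_self s x⟩
    rw [chainCC_self, Finset.sum_singleton]
    exact hwx
  -- claim1
  have claim1 : ∀ y : V, SMax s x y → SMax s v y := by
    intro y hy
    refine ⟨le_trans hvx0 hy.1, fun p hp => ?_⟩
    rw [mem_chainCO'] at hp
    have hsxy : x ≠ y → s x < s y := fun hne =>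
      hy.2 x (mem_chainCO'.2 ⟨hne, le_refl x, hy.1⟩)
    rcases htree p x y hp.2.2 hy.1 with h | h
    · rcases h.lt_or_eq with h' | h'
      · have h1 : s p < s x := hxsm.2 p (mem_chainCO'.2 ⟨h'.ne, hp.2.1, h⟩)
        by_cases hxy : x = y
        · exact hxy ▸ h1
        · exact h1.trans (hsxy hxy)
      · have hne : x ≠ y := h' ▸ hp.1
        have := hsxy hne
        rwa [← h'] at this
    · exact hy.2 p (mem_chainCO'.2 ⟨hp.1, h, hp.2.2⟩)
  rcases Finset.mem_insert.1 hi with rfl | hi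
  · rw [costF, if_pos hx, costF, if_pos hxx]
    ring
  · rw [Finset.mem_filter] at hi
    obtain ⟨hiwm, hnxt⟩ := hi
    rw [winMinus, Finset.mem_sdiff] at hiwm
    obtain ⟨hiwin, hnotstar⟩ := hiwm
    have hnsmax : ¬ SMax s v i := fun h =>
      hnotstar (Finset.mem_filter.2 ⟨hiwin, h⟩)
    rw [win, Finset.mem_filter] at hiwin
    have hvi : v ≤ i := hiwin.2.1
    have hvne : v ≠ i := fun h => hnsmax (h ▸ sMax_self s v)
    obtain ⟨hmem, hsm, hmax⟩ := nxt_spec htree hvi hvne (s := s)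
    rw [hnxt] at hmem hsm hmax
    rw [mem_chainCO'] at hmem
    have hxnei : x ≠ i := hmem.1
    have hxi : x ≤ i := hmem.2.2
    -- i ∈ win w w0 x
    have hsub : chainCC x i ⊆ chainCC v i := by
      intro p hp
      rw [mem_chainCC'] at hp ⊢
      exact ⟨le_trans hvx0 hp.1, hp.2⟩
    have hiwinx : i ∈ win w w0 x := by
      rw [win, Finset.mem_filter]
      refine ⟨Finset.mem_univ i, hxi, ?_⟩
      refine le_trans (Finset.sum_le_sum_of_subset_of_nonneg hsub (fun j _ _ => hw j)) ?_
      exact hiwin.2.2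
    have hnsmaxx : ¬ SMax s x i := fun h => hnsmax (claim1 i h)
    have hinotstarx : i ∉ winStar w w0 s x := fun h =>
      hnsmaxx (Finset.mem_filter.1 h).2
    -- nxt s x i = x
    have hnxtx : nxt s x i = x := by
      obtain ⟨hm2, hs2, _⟩ := nxt_spec htree hxi hxnei (s := s)
      rw [mem_chainCO'] at hm2
      have hsvn : SMax s v (nxt s x i) := claim1 _ hs2
      have h1 : nxt s x i ≤ x :=
        hmax _ (mem_chainCO'.2 ⟨hm2.1, le_trans hvx0 hm2.2.1, hm2.2.2⟩) hsvn
      exact le_antisymm h1 hm2.2.1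
    rw [costF, if_neg hnotstar, hnxt, costF, if_neg hinotstarx, hnxtx]
    have := sumF_diff htree F hvx0 hxi
    linarith

end MainProofs

theorem stmt_6 (V : Type) [Fintype V] [Nonempty V] [PartialOrder V]
    (htree : ∀ a b c : V, a ≤ c → b ≤ c → a ≤ b ∨ b ≤ a)
    (w : V → ℝ) (s : V → ℝ) (w0 : ℝ)
    (hw : ∀ i : V, 0 ≤ w i) (hw0 : 0 ≤ w0)
    (F : V → ℝ)
    (v x : V) (hx : x ∈ winStar w w0 s v)
    (i i' : V)
    (hi : i ∈ insert x ((winMinus w w0 s v).filter (fun j => nxt s v j = x)))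
    (hi' : i' ∈ insert x ((winMinus w w0 s v).filter (fun j => nxt s v j = x))) :
    costF w w0 s F v i - costF w w0 s F v i'
      = costF w w0 s F x i - costF w w0 s F x i' ∧
    ((∀ j ∈ insert x ((winMinus w w0 s v).filter (fun j => nxt s v j = x)),
        costF w w0 s F x i ≤ costF w w0 s F x j) →
      ∀ j ∈ insert x ((winMinus w w0 s v).filter (fun j => nxt s v j = x)),
        costF w w0 s F v i ≤ costF w w0 s F v j) := by
  have key : ∀ j ∈ insert x ((winMinus w w0 s v).filter (fun j => nxt s v j = x)),
      costF w w0 s F v j = costF w w0 s F x j + (sumF F v x - sumF F x x) :=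
    fun j hj => cost_eq htree w s w0 F hw hx hj
  constructor
  · rw [key i hi, key i' hi']; ring
  · intro hmin j hj
    have h1 := key i hi
    have h2 := key j hj
    have h3 := hmin j hj
    linarith
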